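/- arXiv:2102.01510 — 5 statements merged into one kernel-verified Lean document; each statement's English description precedes it below -/
import Mathlib

section
/- Let τ = min{ i > 0 : θ^i(G_j) = G_j for all j = 0, 1, …, μ }, where θ^i is applied entrywise to the matrices G_j. Then τ is well defined (the minimum exists), τ ≤ m, and the coefficient matrices of the skew convolutional encoder are τ-periodic in time: θ^{t+τ}(G_j) = θ^t(G_j) for all t ∈ ℕ and all j = 0, 1, …, μ. Consequently the skew convolutional encoder is a periodically time-varying convolutional encoder with period τ ≤ m. -/
/-- For a skew convolutional encoder over `F = GF(q^m)` with Frobenius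
`θ(a) = a^q` and coefficient matrices `G_0, …, G_μ`, the quantity
`τ = min{ i > 0 : θ^i(G_j) = G_j ∀ j }` is well defined (the minimum exists),
`τ ≤ m`, and the encoder coefficients are `τ`-periodic in time:
`θ^{t+τ}(G_j) = θ^t(G_j)` for all `t` and `j`. -/
theorem skew_encoder_periodic
    (q p e m k n μ : ℕ) (hp : p.Prime) (he : 0 < e) (hq : q = p ^ e) (hm : 1 ≤ m)
    (F : Type) [Field F] [Fintype F] (hcard : Fintype.card F = q ^ m)
    (θ : F ≃+* F) (hθ : ∀ a : F, θ a = a ^ q)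
    (G : Fin (μ + 1) → Matrix (Fin k) (Fin n) F) :
    ∃ τ : ℕ,
      IsLeast {i : ℕ | 0 < i ∧ ∀ j : Fin (μ + 1), (G j).map ⇑(θ ^ i) = G j} τ ∧
      τ ≤ m ∧
      ∀ (t : ℕ) (j : Fin (μ + 1)), (G j).map ⇑(θ ^ (t + τ)) = (G j).map ⇑(θ ^ t) := by
  -- θ^i a = a^(q^i)
  have hpow : ∀ (i : ℕ) (a : F), (θ ^ i) a = a ^ q ^ i := by
    intro i
    induction i with
    | zero => intro a; rw [pow_zero, pow_zero, pow_one]; rfl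
    | succ i ih =>
      intro a
      have h1 : (θ ^ (i + 1)) a = (θ ^ i) (θ a) := by
        rw [pow_succ]; rfl
      rw [h1, ih, hθ, ← pow_mul, ← pow_succ']
  -- m is in the set
  have hmem : m ∈ {i : ℕ | 0 < i ∧ ∀ j : Fin (μ + 1), (G j).map ⇑(θ ^ i) = G j} := by
    refine ⟨hm, fun j => ?_⟩
    ext r c
    simp only [Matrix.map_apply]
    rw [hpow, ← hcard, FiniteField.pow_card]
  have hne : {i : ℕ | 0 < i ∧ ∀ j : Fin (μ + 1), (G j).map ⇑(θ ^ i) = G j}.Nonempty :=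
    ⟨m, hmem⟩
  set S := {i : ℕ | 0 < i ∧ ∀ j : Fin (μ + 1), (G j).map ⇑(θ ^ i) = G j}
  have hτmem : sInf S ∈ S := Nat.sInf_mem hne
  refine ⟨sInf S, ⟨hτmem, fun i hi => Nat.sInf_le hi⟩, Nat.sInf_le hmem, ?_⟩
  set τ := sInf S
  intro t j
  have hfix := hτmem.2 j
  have hfix' : ∀ (r : Fin k) (c : Fin n), (θ ^ τ) (G j r c) = G j r c := by
    intro r c
    have := congrFun (congrFun hfix r) c
    simpa [Matrix.map_apply] using this
  ext r c
  simp only [Matrix.map_apply]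
  rw [hpow, hpow, pow_add, mul_comm, pow_mul]
  rw [← hpow τ (G j r c), hfix' r c]
end

section
/- The free distance of the example skew convolutional code C equals 4: for every information sequence u over F_4 with finite support and u ≠ 0, the weight of the code sequence v (the total number of nonzero F_4-entries over all blocks v_t) is at least 4, and there exists a finitely supported nonzero u whose code sequence has weight exactly 4. -/
/-- The encoder of the example skew convolutional [2,1] code over `F_4` (with
`α² = α + 1`): `v_t = u_t(1, α²) + u_{t−1}(α, α²)` for odd `t` and
`v_t = u_t(1, α) + u_{t−1}(α², α)` for even `t`, with `u_t = 0` for `t < 0`. -/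
noncomputable def skewEncEx {F : Type} [Field F] (α : F) (u : ℤ → F) (t : ℤ) :
    Fin 2 → F :=
  if Odd t then u t • ![1, α ^ 2] + u (t - 1) • ![α, α ^ 2]
  else u t • ![1, α] + u (t - 1) • ![α ^ 2, α]

/-- The free distance of the example skew convolutional code equals 4:
every finitely supported nonzero causal information sequence `u` over `F_4` is encoded
to a code sequence of weight (total number of nonzero `F_4`-entries over all blocks)
at least 4, and some finitely supported nonzero `u` achieves weight exactly 4. -/
theorem skew_example_free_distance_four
    (F : Type) [Field F] [Fintype F] (hF : Fintype.card F = 4)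
    (α : F) (hα : α ^ 2 = α + 1) :
    (∀ u : ℤ → F, (∀ t : ℤ, t < 0 → u t = 0) → {t : ℤ | u t ≠ 0}.Finite → u ≠ 0 →
      4 ≤ {p : ℤ × Fin 2 | skewEncEx α u p.1 p.2 ≠ 0}.ncard) ∧
    (∃ u : ℤ → F, (∀ t : ℤ, t < 0 → u t = 0) ∧ {t : ℤ | u t ≠ 0}.Finite ∧ u ≠ 0 ∧
      {p : ℤ × Fin 2 | skewEncEx α u p.1 p.2 ≠ 0}.ncard = 4) := by
  have hα0 : α ≠ 0 := by intro h; rw [h] at hα; simp at hα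
  have hα20 : α ^ 2 ≠ 0 := pow_ne_zero 2 hα0
  -- if both relevant inputs vanish, the block vanishes
  have keyz : ∀ (u : ℤ → F) (t : ℤ), u t = 0 → u (t - 1) = 0 →
      ∀ i, skewEncEx α u t i = 0 := by
    intro u t h1 h2 i
    unfold skewEncEx; split <;> simp [h1, h2]
  -- block with fresh nonzero input, zero memory
  have key1 : ∀ (u : ℤ → F) (t : ℤ), u t ≠ 0 → u (t - 1) = 0 →
      ∀ i, skewEncEx α u t i ≠ 0 := by
    intro u t h1 h2 i
    unfold skewEncEx; split <;> fin_cases i <;> simp [h1, h2, hα0, hα20]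
  -- block with zero input, nonzero memory
  have key2 : ∀ (u : ℤ → F) (t : ℤ), u t = 0 → u (t - 1) ≠ 0 →
      ∀ i, skewEncEx α u t i ≠ 0 := by
    intro u t h1 h2 i
    unfold skewEncEx; split <;> fin_cases i <;> simp [h1, h2, hα0, hα20]
  constructor
  · intro u _ hfin hne
    obtain ⟨t0, ht0⟩ := Function.ne_iff.mp hne
    have ht0' : u t0 ≠ 0 := ht0
    have hSne : hfin.toFinset.Nonempty := ⟨t0, by simp [ht0']⟩
    set s := hfin.toFinset.min' hSne with hs
    set e := hfin.toFinset.max' hSne with he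
    have hse : s ≤ e := Finset.min'_le _ _ (Finset.max'_mem _ hSne)
    have hus : u s ≠ 0 := by
      have := hfin.toFinset.min'_mem hSne
      simpa using this
    have hue : u e ≠ 0 := by
      have := hfin.toFinset.max'_mem hSne
      simpa using this
    have hus1 : u (s - 1) = 0 := by
      by_contra h
      have : s ≤ s - 1 := Finset.min'_le _ _ (by simpa using h)
      omega
    have hue1 : u (e + 1) = 0 := by
      by_contra h
      have : e + 1 ≤ e := Finset.le_max' _ _ (by simpa using h)
      omega
    -- finiteness of the weight set
    have hVfin : {p : ℤ × Fin 2 | skewEncEx α u p.1 p.2 ≠ 0}.Finite := by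
      apply Set.Finite.subset
        (((hfin.union (hfin.image (· + 1))).prod (Set.finite_univ (α := Fin 2))))
      rintro ⟨t, i⟩ hp
      refine ⟨?_, trivial⟩
      by_contra h
      simp only [Set.mem_union, Set.mem_setOf_eq, Set.mem_image, not_or, not_exists,
        not_and, not_not] at h
      obtain ⟨h1, h2⟩ := h
      have h3 : u (t - 1) = 0 := by
        by_contra h4
        have := h2 (t - 1) h4
        omega
      exact hp (keyz u t h1 h3 i)
    -- the four guaranteed positions
    have hsub : (↑({(s, 0), (s, 1), (e + 1, 0), (e + 1, 1)} : Finset (ℤ × Fin 2)) : Set (ℤ × Fin 2))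
        ⊆ {p : ℤ × Fin 2 | skewEncEx α u p.1 p.2 ≠ 0} := by
      intro p hp
      simp only [Finset.coe_insert, Finset.coe_singleton, Set.mem_insert_iff,
        Set.mem_singleton_iff] at hp
      have hue' : u (e + 1 - 1) ≠ 0 := by simpa using hue
      rcases hp with h | h | h | h <;> subst h <;> simp only [Set.mem_setOf_eq]
      · exact key1 u s hus hus1 0
      · exact key1 u s hus hus1 1
      · exact key2 u (e + 1) hue1 hue' 0
      · exact key2 u (e + 1) hue1 hue' 1
    have hcard : ({(s, 0), (s, 1), (e + 1, 0), (e + 1, 1)} : Finset (ℤ × Fin 2)).card = 4 := by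
      have h1 : s ≠ e + 1 := by omega
      rw [Finset.card_insert_of_notMem, Finset.card_insert_of_notMem,
        Finset.card_insert_of_notMem, Finset.card_singleton] <;>
        simp [Prod.ext_iff, h1]
    calc (4 : ℕ) = (↑({(s, 0), (s, 1), (e + 1, 0), (e + 1, 1)} : Finset (ℤ × Fin 2)) :
          Set (ℤ × Fin 2)).ncard := by rw [Set.ncard_coe_finset, hcard]
      _ ≤ _ := Set.ncard_le_ncard hsub hVfin
  · refine ⟨fun t => if t = 0 then 1 else 0, ?_, ?_, ?_, ?_⟩
    · intro t ht; simp [show t ≠ 0 by omega]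
    · apply Set.Finite.subset (Set.finite_singleton 0)
      intro t ht
      simp only [Set.mem_setOf_eq] at ht
      by_contra h
      exact ht (by simp_all)
    · intro h
      have := congrFun h 0
      simp at this
    · set u : ℤ → F := fun t => if t = 0 then 1 else 0 with hu
      have hset : {p : ℤ × Fin 2 | skewEncEx α u p.1 p.2 ≠ 0} =
          (↑({((0:ℤ), (0:Fin 2)), (0, 1), (1, 0), (1, 1)} : Finset (ℤ × Fin 2)) :
            Set (ℤ × Fin 2)) := by
        ext ⟨t, i⟩
        simp only [Set.mem_setOf_eq, Finset.coe_insert, Finset.coe_singleton,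
          Set.mem_insert_iff, Set.mem_singleton_iff, Prod.ext_iff]
        constructor
        · intro hp
          by_contra h
          push_neg at h
          have ht0 : t ≠ 0 := by
            intro he; subst he
            fin_cases i <;> simp_all
          have ht1 : t ≠ 1 := by
            intro he; subst he
            fin_cases i <;> simp_all
          exact hp (keyz u t (by simp [hu, ht0]) (by simp [hu, show t - 1 ≠ 0 by omega]) i)
        · intro h
          have h0 : u 0 ≠ 0 := by simp [hu]
          have hm : u (-1 : ℤ) = 0 := by simp [hu]
          have h1 : u 1 = 0 := by simp [hu]
          rcases h with ⟨h, h'⟩ | ⟨h, h'⟩ | ⟨h, h'⟩ | ⟨h, h'⟩ <;> subst h <;> subst h'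
          · exact key1 u 0 h0 (by simpa using hm) 0
          · exact key1 u 0 h0 (by simpa using hm) 1
          · exact key2 u 1 h1 (by simpa using h0) 0
          · exact key2 u 1 h1 (by simpa using h0) 1
      rw [hset, Set.ncard_coe_finset]
      decide
end

section
/- For the example skew convolutional code C, the ℓ-th order active burst distance satisfies d_ℓ^b = ℓ + 2 for every ℓ ≥ 2; that is, the minimum of Σ_{s=0}^{ℓ−1} wt(v_{t+s}) over all starting times t ∈ ℕ and all information sequences u describing a loop of length ℓ at time t (i.e., u_{t−1} = 0, u_{t+s} ≠ 0 for 0 ≤ s ≤ ℓ−2, and u_{t+ℓ−1} = 0) equals ℓ + 2, where wt(v_{t+s}) denotes the number of nonzero F_4-entries of the block v_{t+s}. Consequently the slope σ = lim_{ℓ→∞} d_ℓ^b/ℓ equals 1. -/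
section Aux
variable {F : Type} [Field F]

open Classical in
lemma wt2 (v : Fin 2 → F) :
    {j : Fin 2 | v j ≠ 0}.ncard =
      (if v 0 = 0 then 0 else 1) + (if v 1 = 0 then 0 else 1) := by
  classical
  have h : {j : Fin 2 | v j ≠ 0} =
      ((Finset.univ.filter (fun j => v j ≠ 0) : Finset (Fin 2)) : Set (Fin 2)) := by
    ext j; simp
  rw [h, Set.ncard_coe_finset, Finset.card_filter, Fin.sum_univ_two]
  by_cases h0 : v 0 = 0 <;> by_cases h1 : v 1 = 0 <;> simp [h0, h1]

lemma enc0 (α : F) (u : ℤ → F) (t : ℤ) :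
    skewEncEx α u t 0 = if Odd t then u t + u (t-1) * α else u t + u (t-1) * α^2 := by
  by_cases ht : Odd t <;>
    simp [skewEncEx, ht, Matrix.cons_val_zero]

lemma enc1 (α : F) (u : ℤ → F) (t : ℤ) :
    skewEncEx α u t 1 = if Odd t then (u t + u (t-1)) * α^2 else (u t + u (t-1)) * α := by
  by_cases ht : Odd t <;>
    simp [skewEncEx, ht, Matrix.cons_val_one, Matrix.head_cons] <;> ring

end Aux
section Blocks
variable {F : Type} [Field F] {α : F}

lemma f4facts (h2 : (1:F)+1 = 0) (hα : α^2 = α+1) :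
    α ≠ 0 ∧ (1:F)+α = α^2 ∧ (1:F)+α^2 = α := by
  refine ⟨?_, (add_comm 1 α).trans hα.symm, by linear_combination hα + h2⟩
  intro h; rw [h] at hα; simp at hα

lemma wt_start (h2 : (1:F)+1 = 0) (hα : α^2 = α+1) (u : ℤ → F) (t : ℤ)
    (ha : u t ≠ 0) (hb : u (t-1) = 0) :
    {j : Fin 2 | skewEncEx α u t j ≠ 0}.ncard = 2 := by
  obtain ⟨hα0, -, -⟩ := f4facts h2 hα
  rw [wt2, enc0, enc1]
  by_cases ht : Odd t <;>
    simp [ht, hb, ha, hα0, pow_eq_zero_iff]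

lemma wt_end (h2 : (1:F)+1 = 0) (hα : α^2 = α+1) (u : ℤ → F) (t : ℤ)
    (ha : u t = 0) (hb : u (t-1) ≠ 0) :
    {j : Fin 2 | skewEncEx α u t j ≠ 0}.ncard = 2 := by
  obtain ⟨hα0, -, -⟩ := f4facts h2 hα
  rw [wt2, enc0, enc1]
  by_cases ht : Odd t <;>
    simp [ht, hb, ha, hα0, pow_eq_zero_iff]

lemma wt_mid_eq (h2 : (1:F)+1 = 0) (hα : α^2 = α+1) (u : ℤ → F) (t : ℤ)
    (ha : u t ≠ 0) (he : u (t-1) = u t) :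
    {j : Fin 2 | skewEncEx α u t j ≠ 0}.ncard = 1 := by
  obtain ⟨hα0, h1, h1'⟩ := f4facts h2 hα
  have hz : u t + u t = 0 := by linear_combination (u t) * h2
  rw [wt2, enc0, enc1, he]
  by_cases ht : Odd t
  · rw [if_pos ht, if_pos ht, hz, zero_mul, if_pos rfl]
    have e0 : u t + u t * α = u t * α^2 := by linear_combination (u t) * h1
    rw [e0, if_neg (mul_ne_zero ha (pow_ne_zero 2 hα0))]
  · rw [if_neg ht, if_neg ht, hz, zero_mul, if_pos rfl]
    have e0 : u t + u t * α^2 = u t * α := by linear_combination (u t) * h1'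
    rw [e0, if_neg (mul_ne_zero ha hα0)]

lemma wt_mid_ge (h2 : (1:F)+1 = 0) (hα : α^2 = α+1) (u : ℤ → F) (t : ℤ)
    (ha : u t ≠ 0) :
    1 ≤ {j : Fin 2 | skewEncEx α u t j ≠ 0}.ncard := by
  obtain ⟨hα0, h1, h1'⟩ := f4facts h2 hα
  by_cases hz : u t + u (t-1) = 0
  · have he : u (t-1) = u t := by linear_combination hz - (u t) * h2
    rw [wt_mid_eq h2 hα u t ha he]
  · rw [wt2, enc0, enc1]
    by_cases ht : Odd t
    · rw [if_pos ht, if_pos ht,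
        if_neg (mul_ne_zero hz (pow_ne_zero 2 hα0))]
      exact Nat.le_add_left 1 _
    · rw [if_neg ht, if_neg ht, if_neg (mul_ne_zero hz hα0)]
      exact Nat.le_add_left 1 _

end Blocks

/-- For the example skew convolutional code, the `ℓ`-th order active
burst distance satisfies `d_ℓ^b = ℓ + 2` for every `ℓ ≥ 2`: the minimum of
`Σ_{s=0}^{ℓ−1} wt(v_{t+s})` over all starting times `t ∈ ℕ` and all information
sequences `u` describing a loop of length `ℓ` at time `t` (i.e. `u_{t−1} = 0`,
`u_{t+s} ≠ 0` for `0 ≤ s ≤ ℓ−2`, `u_{t+ℓ−1} = 0`) equals `ℓ + 2`.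
Consequently the slope `σ = lim_{ℓ→∞} d_ℓ^b/ℓ` equals 1. -/
theorem skew_example_active_burst_distance
    (F : Type) [Field F] [Fintype F] (hF : Fintype.card F = 4)
    (α : F) (hα : α ^ 2 = α + 1) :
    ∃ d : ℕ → ℕ,
      (∀ ℓ : ℕ, 2 ≤ ℓ →
        IsLeast
          {w : ℕ | ∃ (t : ℤ) (u : ℤ → F), 0 ≤ t ∧ (∀ s : ℤ, s < 0 → u s = 0) ∧
            u (t - 1) = 0 ∧ (∀ s : ℕ, s ≤ ℓ - 2 → u (t + s) ≠ 0) ∧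
            u (t + (ℓ : ℤ) - 1) = 0 ∧
            w = ∑ s ∈ Finset.range ℓ,
                  {j : Fin 2 | skewEncEx α u (t + s) j ≠ 0}.ncard}
          (d ℓ) ∧
        d ℓ = ℓ + 2) ∧
      Filter.Tendsto (fun ℓ : ℕ => (d ℓ : ℝ) / (ℓ : ℝ)) Filter.atTop (nhds 1) := by
  classical
  have h2 : (1:F) + 1 = 0 := by
    have h4 : ((Fintype.card F : ℕ) : F) = 0 := FiniteField.cast_card_eq_zero F
    rw [hF] at h4
    have hsq : ((1:F) + 1)^2 = 0 := by push_cast at h4; linear_combination h4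
    exact (pow_eq_zero_iff two_ne_zero).mp hsq
  refine ⟨fun ℓ => ℓ + 2, fun ℓ hℓ => ?_, ?_⟩
  · obtain ⟨m, rfl⟩ : ∃ m, ℓ = m + 2 := ⟨ℓ - 2, by omega⟩
    constructor
    constructor
    · -- membership: the all-ones burst
      set u : ℤ → F := fun x => if 0 ≤ x ∧ x ≤ (m:ℤ) then 1 else 0 with hu
      have hu1 : ∀ x : ℤ, 0 ≤ x → x ≤ (m:ℤ) → u x = 1 := by
        intro x hx1 hx2; rw [hu]; exact if_pos ⟨hx1, hx2⟩
      have hu0 : ∀ x : ℤ, x < 0 ∨ (m:ℤ) < x → u x = 0 := by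
        intro x hx; rw [hu]; exact if_neg (by omega)
      refine ⟨0, u, le_refl 0, fun s hs => hu0 s (Or.inl hs), ?_, ?_, ?_, ?_⟩
      · exact hu0 _ (Or.inl (by omega))
      · intro s hs
        rw [hu1 _ (by positivity) (by push_cast; omega)]
        exact one_ne_zero
      · exact hu0 _ (Or.inr (by push_cast; omega))
      · simp only [zero_add]
        rw [Finset.sum_range_succ, Finset.sum_range_succ']
        have g0 : {j : Fin 2 | skewEncEx α u ((0:ℕ):ℤ) j ≠ 0}.ncard = 2 := by
          apply wt_start h2 hα
          · rw [hu1 _ (by norm_num) (by norm_num)]; exact one_ne_zero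
          · exact hu0 _ (Or.inl (by norm_num))
        have gend : {j : Fin 2 | skewEncEx α u ((m+1:ℕ):ℤ) j ≠ 0}.ncard = 2 := by
          apply wt_end h2 hα
          · exact hu0 _ (Or.inr (by push_cast; omega))
          · have e : ((m+1:ℕ):ℤ) - 1 = (m:ℤ) := by push_cast; ring
            rw [e, hu1 _ (by positivity) le_rfl]; exact one_ne_zero
        have gmid : ∀ i ∈ Finset.range m,
            {j : Fin 2 | skewEncEx α u ((i+1:ℕ):ℤ) j ≠ 0}.ncard = 1 := by
          intro i hi
          rw [Finset.mem_range] at hi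
          apply wt_mid_eq h2 hα
          · rw [hu1 _ (by positivity) (by push_cast; omega)]; exact one_ne_zero
          · have e : ((i+1:ℕ):ℤ) - 1 = (i:ℤ) := by push_cast; ring
            rw [e, hu1 _ (by positivity) (by push_cast; omega),
              hu1 _ (by positivity) (by push_cast; omega)]
        rw [g0, gend, Finset.sum_congr rfl gmid, Finset.sum_const, Finset.card_range,
          smul_eq_mul, mul_one]
    · -- lower bound
      rintro w ⟨t, u, -, -, hstart, hmid, hend, rfl⟩
      show m + 2 + 2 ≤ _
      have hmid' : ∀ s : ℕ, s ≤ m → u (t + s) ≠ 0 := fun s hs => hmid s (by omega)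
      rw [Finset.sum_range_succ, Finset.sum_range_succ']
      have g0 : {j : Fin 2 | skewEncEx α u (t + ((0:ℕ):ℤ)) j ≠ 0}.ncard = 2 := by
        apply wt_start h2 hα
        · exact hmid' 0 (Nat.zero_le m)
        · have e : t + ((0:ℕ):ℤ) - 1 = t - 1 := by push_cast; ring
          rw [e]; exact hstart
      have gend : {j : Fin 2 | skewEncEx α u (t + ((m+1:ℕ):ℤ)) j ≠ 0}.ncard = 2 := by
        apply wt_end h2 hα
        · have e : t + ((m+1:ℕ):ℤ) = t + ((m+2:ℕ):ℤ) - 1 := by push_cast; ring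
          rw [e]; exact hend
        · have e : t + ((m+1:ℕ):ℤ) - 1 = t + ((m:ℕ):ℤ) := by push_cast; ring
          rw [e]; exact hmid' m le_rfl
      have gmid : (Finset.range m).card • 1 ≤
          ∑ i ∈ Finset.range m, {j : Fin 2 | skewEncEx α u (t + ((i+1:ℕ):ℤ)) j ≠ 0}.ncard := by
        apply Finset.card_nsmul_le_sum
        intro i hi
        rw [Finset.mem_range] at hi
        exact wt_mid_ge h2 hα u _ (hmid' (i+1) (by omega))
      rw [Finset.card_range, smul_eq_mul, mul_one] at gmid
      omega
    · rfl
  · have h1 : Filter.Tendsto (fun ℓ : ℕ => 1 + 2 / (ℓ:ℝ)) Filter.atTop (nhds (1 + 0)) :=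
      tendsto_const_nhds.add (tendsto_const_div_atTop_nhds_zero_nat 2)
    rw [add_zero] at h1
    apply h1.congr'
    filter_upwards [Filter.eventually_gt_atTop 0] with ℓ hℓ
    have hℓ0 : (ℓ:ℝ) ≠ 0 := Nat.cast_ne_zero.mpr (by omega)
    push_cast
    field_simp
end

section
/- The generator matrix G(D) = (1 + αD, α + α²D) of the example skew convolutional code C with Frobenius θ(a) = a² is non-catastrophic: for every information sequence u over F_4 with infinitely many nonzero blocks u_t, the code sequence v has infinitely many nonzero blocks v_t. -/
/-- The generator matrix `G(D) = (1 + αD, α + α²D)` of the example skew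
convolutional code over `F_4` with Frobenius `θ(a) = a²` is non-catastrophic: every
causal information sequence with infinitely many nonzero blocks is encoded to a code
sequence with infinitely many nonzero blocks. -/
theorem skew_example_non_catastrophic
    (F : Type) [Field F] [Fintype F] (hF : Fintype.card F = 4)
    (α : F) (hα : α ^ 2 = α + 1) :
    ∀ u : ℤ → F, (∀ t : ℤ, t < 0 → u t = 0) → {t : ℤ | u t ≠ 0}.Infinite →
      {t : ℤ | skewEncEx α u t ≠ 0}.Infinite := by
  have hα0 : α ≠ 0 := by
    intro h; rw [h] at hα; simp at hα
  have hα1 : α - 1 ≠ 0 := by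
    intro h
    exact one_ne_zero (α := F) (by linear_combination -hα + α * h)
  intro u _ hu
  refine hu.mono ?_
  intro t ht hv
  simp only [Set.mem_setOf_eq] at ht
  apply ht
  by_cases h : Odd t
  · simp only [skewEncEx, if_pos h] at hv
    have h0 := congrFun hv 0
    have h1 := congrFun hv 1
    simp [Matrix.cons_val_zero, Matrix.cons_val_one] at h0 h1
    -- h0 : u t + u (t-1) * α = 0 ; h1 : u t * α^2 + u (t-1) * α^2 = 0
    have hb : u (t - 1) = 0 := by
      have hsum : u t = -u (t - 1) := by
        have h2 : (u t + u (t - 1)) * α ^ 2 = 0 := by linear_combination h1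
        rcases mul_eq_zero.mp h2 with h3 | h3
        · linear_combination h3
        · exact absurd h3 (pow_ne_zero 2 hα0)
      have hf : u (t - 1) * (α - 1) = 0 := by linear_combination h0 - hsum
      rcases mul_eq_zero.mp hf with h3 | h3
      · exact h3
      · exact absurd h3 hα1
    rw [hb] at h0; simpa using h0
  · simp only [skewEncEx, if_neg h] at hv
    have h0 := congrFun hv 0
    have h1 := congrFun hv 1
    simp [Matrix.cons_val_zero, Matrix.cons_val_one] at h0 h1
    have hb : u (t - 1) = 0 := by
      have hsum : u t = -u (t - 1) := by
        have h2 : (u t + u (t - 1)) * α = 0 := by linear_combination h1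
        rcases mul_eq_zero.mp h2 with h3 | h3
        · linear_combination h3
        · exact absurd h3 hα0
      have hf : u (t - 1) * (α ^ 2 - 1) = 0 := by linear_combination h0 - hsum
      rcases mul_eq_zero.mp hf with h3 | h3
      · exact h3
      · apply absurd h3
        rw [hα]; simpa using hα0
    rw [hb] at h0; simpa using h0
end

section
/- The example skew convolutional code C is not a fixed (time-invariant) memory-1 convolutional code: the skew encoder of C maps the information sequence u = 1, 0, 0, 1, 0, 0, … to the code sequence v = (1,α), (α,α²), (0,0), (1,α²), (α²,α), (0,0), …, but there exist no row vectors A_0, A_1 ∈ F_4^{1×2} such that the time-invariant encoder v_t = u_t A_0 + u_{t−1} A_1 maps this u to this v. -/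
/-- The information sequence `u = 1, 0, 0, 1, 0, 0, …` (i.e. `u_0 = u_3 = 1`,
all other blocks zero). -/
def uEx13 {F : Type} [Field F] : ℤ → F := fun t => if t = 0 ∨ t = 3 then 1 else 0

/-- The example skew convolutional code is not a fixed (time-invariant)
memory-1 convolutional code: the skew encoder maps `u = 1,0,0,1,0,0,…` to
`v = (1,α),(α,α²),(0,0),(1,α²),(α²,α),(0,0),…`, but no time-invariant encoder
`v_t = u_t A_0 + u_{t−1} A_1` maps this `u` to this `v`. -/
theorem skew_example_not_time_invariant
    (F : Type) [Field F] [Fintype F] (hF : Fintype.card F = 4)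
    (α : F) (hα : α ^ 2 = α + 1) :
    skewEncEx α (uEx13 (F := F)) 0 = ![1, α] ∧
    skewEncEx α (uEx13 (F := F)) 1 = ![α, α ^ 2] ∧
    skewEncEx α (uEx13 (F := F)) 2 = 0 ∧
    skewEncEx α (uEx13 (F := F)) 3 = ![1, α ^ 2] ∧
    skewEncEx α (uEx13 (F := F)) 4 = ![α ^ 2, α] ∧
    (∀ t : ℤ, 5 ≤ t → skewEncEx α (uEx13 (F := F)) t = 0) ∧
    ¬ ∃ A₀ A₁ : Fin 2 → F, ∀ t : ℤ, 0 ≤ t →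
        skewEncEx α (uEx13 (F := F)) t
          = uEx13 (F := F) t • A₀ + uEx13 (F := F) (t - 1) • A₁ := by
  refine ⟨?_, ?_, ?_, ?_, ?_, ?_, ?_⟩
  · simp [skewEncEx, uEx13, Int.odd_iff]
  · norm_num [skewEncEx, uEx13, Int.odd_iff]
  · norm_num [skewEncEx, uEx13, Int.odd_iff]
  · norm_num [skewEncEx, uEx13, Int.odd_iff]
  · norm_num [skewEncEx, uEx13, Int.odd_iff]
  · intro t ht
    have h1 : uEx13 (F := F) t = 0 := by
      have : ¬(t = 0 ∨ t = 3) := by omega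
      simp [uEx13, this]
    have h2 : uEx13 (F := F) (t - 1) = 0 := by
      have : ¬(t - 1 = 0 ∨ t - 1 = 3) := by omega
      simp [uEx13, this]
    simp [skewEncEx, h1, h2]
  · rintro ⟨A₀, A₁, h⟩
    have h0 := h 0 (by norm_num)
    have h3 := h 3 (by norm_num)
    simp only [skewEncEx, uEx13] at h0 h3
    norm_num [Int.odd_iff] at h0 h3
    have e0 := congrFun h0 1
    have e3 := congrFun h3 1
    simp at e0 e3
    rw [← e0, hα] at e3
    have : (1 : F) = 0 := by linear_combination e3
    simp at this
end
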